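/- Let m, n, r be nonnegative integers with 0 ≤ r < m. Then Σ_{j=1}^∞ (−1)^{j+1} · a_{r,m}(n − 3j(j+1)/2) = Σ_{j=0}^∞ (mj + r)·G(n − mj − r). -/

import Mathlib

noncomputable section

/-- `partitionCount n` is the number of partitions of `n`. -/
def partitionCount (n : ℕ) : ℕ := Nat.card (Nat.Partition n)

/-- `p` extended to `ℤ`, vanishing on negative arguments. -/
def pZ (x : ℤ) : ℤ := if 0 ≤ x then partitionCount x.toNat else 0

/-- `a r m n` is the sum of all different parts congruent to `r` mod `m`
in all partitions of `n` (each distinct part value counted once per partition). -/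
def a (r m n : ℕ) : ℕ :=
  ∑ l : Nat.Partition n, ∑ d ∈ l.parts.toFinset, if d % m = r then d else 0

/-- `a r m` extended to `ℤ`, vanishing on negative arguments. -/
def aZ (r m : ℕ) (x : ℤ) : ℤ := if 0 ≤ x then a r m x.toNat else 0

/-- `s m n` is the sum of different parts appearing at least `m` times
in all partitions of `n` (each such distinct part value counted once per partition). -/
def s (m n : ℕ) : ℕ :=
  ∑ l : Nat.Partition n, ∑ d ∈ l.parts.toFinset, if m ≤ l.parts.count d then d else 0

/-- `s m` extended to `ℤ`, vanishing on negative arguments. -/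
def sZ (m : ℕ) (x : ℤ) : ℤ := if 0 ≤ x then s m x.toNat else 0

/-- `peo n = p_e(n) - p_o(n)`: partitions with an even number of parts minus
partitions with an odd number of parts. -/
def peo (n : ℕ) : ℤ :=
  (Nat.card {l : Nat.Partition n // Even (Multiset.card l.parts)} : ℤ) -
    (Nat.card {l : Nat.Partition n // Odd (Multiset.card l.parts)} : ℤ)

/-- `peo` extended to `ℤ`, vanishing on negative arguments. -/
def peoZ (x : ℤ) : ℤ := if 0 ≤ x then peo x.toNat else 0

/-- Number of partitions of `n` into distinct parts, all odd. -/
def qodd (n : ℕ) : ℕ :=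
  Nat.card {l : Nat.Partition n // l.parts.Nodup ∧ ∀ d ∈ l.parts, Odd d}

/-- `qodd` extended to `ℤ`, vanishing on negative arguments. -/
def qoddZ (x : ℤ) : ℤ := if 0 ≤ x then qodd x.toNat else 0

/-- Number of partitions of `n` into distinct parts. -/
def q (n : ℕ) : ℕ := Nat.card {l : Nat.Partition n // l.parts.Nodup}

/-- `q(x/2)`, set to `0` whenever `x/2` is not a nonnegative integer. -/
def qHalfZ (x : ℤ) : ℤ := if 0 ≤ x ∧ 2 ∣ x then q (x.toNat / 2) else 0

/-- The rank of a partition: its largest part minus its number of parts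
(the empty partition has rank 0). -/
def rank {n : ℕ} (l : Nat.Partition n) : ℤ :=
  (l.parts.sup : ℤ) - Multiset.card l.parts

/-- Number of partitions of `n` with nonnegative rank. -/
def N (n : ℕ) : ℕ := Nat.card {l : Nat.Partition n // 0 ≤ rank l}

/-- `N` extended to `ℤ`, vanishing on negative arguments. -/
def NZ (x : ℤ) : ℤ := if 0 ≤ x then N x.toNat else 0

/-- Number of partitions of `n` with positive rank. -/
def R (n : ℕ) : ℕ := Nat.card {l : Nat.Partition n // 0 < rank l}

/-- `R` extended to `ℤ`, vanishing on negative arguments. -/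
def RZ (x : ℤ) : ℤ := if 0 ≤ x then R x.toNat else 0

/-- Number of Garden of Eden partitions of `n`, i.e. partitions of rank at most `-2`. -/
def G (n : ℕ) : ℕ := Nat.card {l : Nat.Partition n // rank l ≤ -2}

/-- `G` extended to `ℤ`, vanishing on negative arguments. -/
def GZ (x : ℤ) : ℤ := if 0 ≤ x then G x.toNat else 0

/-- The crank of a partition: the largest part if no part equals 1, and otherwise
the number of parts larger than the multiplicity of 1 minus that multiplicity. -/
def crank {n : ℕ} (l : Nat.Partition n) : ℤ :=
  if Multiset.count 1 l.parts = 0 then (l.parts.sup : ℤ)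
  else (Multiset.card (Multiset.filter (fun d => Multiset.count 1 l.parts < d) l.parts) : ℤ)
    - Multiset.count 1 l.parts

/-- Number of partitions of `n` with nonnegative crank. -/
def C (n : ℕ) : ℕ := Nat.card {l : Nat.Partition n // 0 ≤ crank l}

/-- `C` extended to `ℤ`, vanishing on negative arguments. -/
def CZ (x : ℤ) : ℤ := if 0 ≤ x then C x.toNat else 0

/-- Number of partitions of `n` with positive crank. -/
def D (n : ℕ) : ℕ := Nat.card {l : Nat.Partition n // 0 < crank l}

/-- `D` extended to `ℤ`, vanishing on negative arguments. -/
def DZ (x : ℤ) : ℤ := if 0 ≤ x then D x.toNat else 0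

/-- The minimal excludant of a partition: the least positive integer that is not a part. -/
def mex {n : ℕ} (l : Nat.Partition n) : ℕ := sInf {k : ℕ | 0 < k ∧ k ∉ l.parts}

open Multiset Finset


-- sup of a nonempty multiset of naturals is a member
lemma Multiset.sup_mem_of_ne_zero {s : Multiset ℕ} (h : s ≠ 0) : s.sup ∈ s := by
  induction s using Multiset.induction with
  | empty => simp at h
  | cons a s ih =>
    rw [Multiset.sup_cons]
    rcases eq_or_ne s 0 with rfl | hs
    · simp
    · rcases le_total a s.sup with h1 | h1
      · rw [sup_eq_right.2 h1]; exact Multiset.mem_cons_of_mem (ih hs)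
      · rw [sup_eq_left.2 h1]; exact Multiset.mem_cons_self _ _

lemma Multiset.sum_map_pred {s : Multiset ℕ} (h : ∀ i ∈ s, 1 ≤ i) :
    (s.map (· - 1)).sum = s.sum - Multiset.card s := by
  induction s using Multiset.induction with
  | empty => simp
  | cons a s ih =>
    have ha : 1 ≤ a := h a (mem_cons_self _ _)
    have hs : ∀ i ∈ s, 1 ≤ i := fun i hi => h i (mem_cons_of_mem hi)
    have hcard : Multiset.card s ≤ s.sum := by
      calc (Multiset.card s : ℕ) = (s.map (fun _ => 1)).sum := by simp
      _ ≤ (s.map id).sum := Multiset.sum_map_le_sum_map _ _ fun i hi => hs i hi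
      _ = s.sum := by simp
    rw [Multiset.map_cons, Multiset.sum_cons, Multiset.sum_cons, ih hs, Multiset.card_cons]
    omega

-- partitions of n containing part d ≃ partitions of (n - d)
def memEquiv (n d : ℕ) (hd : 0 < d) (hdn : d ≤ n) :
    {l : Nat.Partition n // d ∈ l.parts} ≃ Nat.Partition (n - d) where
  toFun l := ⟨l.1.parts.erase d,
    fun hi => l.1.parts_pos (Multiset.mem_of_mem_erase hi),
    by
      have := l.1.parts_sum
      have h2 : d + (l.1.parts.erase d).sum = l.1.parts.sum := by
        rw [← Multiset.sum_cons, Multiset.cons_erase l.2]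
      omega⟩
  invFun q := ⟨⟨d ::ₘ q.parts,
    fun hi => (Multiset.mem_cons.1 hi).elim (fun h => h ▸ hd) (fun h => q.parts_pos h),
    by rw [Multiset.sum_cons, q.parts_sum]; omega⟩, Multiset.mem_cons_self _ _⟩
  left_inv l := by
    apply Subtype.ext; apply Nat.Partition.ext; exact Multiset.cons_erase l.2
  right_inv q := by
    apply Nat.Partition.ext; exact Multiset.erase_cons_head _ _

lemma part_le {n : ℕ} (l : Nat.Partition n) {d : ℕ} (hd : d ∈ l.parts) : d ≤ n := by
  rw [← l.parts_sum]; exact Multiset.le_sum_of_mem (by simpa using hd)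

lemma a_eq (r m n : ℕ) :
    a r m n = ∑ d ∈ Finset.range (n+1), if d % m = r then d * partitionCount (n - d) else 0 := by
  unfold a
  have h1 : ∀ l : Nat.Partition n, (∑ d ∈ l.parts.toFinset, if d % m = r then d else 0)
      = ∑ d ∈ Finset.range (n+1), if d ∈ l.parts then (if d % m = r then d else 0) else 0 := by
    intro l
    have hfs : l.parts.toFinset = (Finset.range (n+1)).filter (· ∈ l.parts) := by
      ext d
      simp only [Finset.mem_filter, Finset.mem_range, Multiset.mem_toFinset]
      exact ⟨fun hd => ⟨Nat.lt_succ_of_le (part_le l hd), hd⟩, fun hd => hd.2⟩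
    rw [hfs, Finset.sum_filter]
  simp_rw [h1]
  rw [Finset.sum_comm]
  apply Finset.sum_congr rfl
  intro d hd
  rw [Finset.mem_range] at hd
  have key : (∑ l : Nat.Partition n, if d ∈ l.parts then (if d % m = r then d else 0) else 0)
      = (if d % m = r then d else 0) * Nat.card {l : Nat.Partition n // d ∈ l.parts} := by
    rw [Nat.card_eq_fintype_card, Fintype.card_subtype, Finset.card_eq_sum_ones,
      Finset.mul_sum, Finset.sum_filter]
    apply Finset.sum_congr rfl
    intro l _
    split <;> simp
  rw [key]
  rcases Nat.eq_zero_or_pos d with rfl | hdpos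
  · simp; left; by_cases h0 : 0 = r <;> simp [h0]
  · rw [Nat.card_congr (memEquiv n d hdpos (by omega))]
    unfold partitionCount
    split <;> simp

lemma card_le_sum {s : Multiset ℕ} (h : ∀ i ∈ s, 1 ≤ i) : Multiset.card s ≤ s.sum := by
  calc (Multiset.card s : ℕ) = (s.map (fun _ => 1)).sum := by simp
  _ ≤ (s.map id).sum := Multiset.sum_map_le_sum_map _ _ h
  _ = s.sum := by simp

lemma sum_filter_pos (s : Multiset ℕ) : (s.filter (0 < ·)).sum = s.sum := by
  conv_rhs => rw [← Multiset.filter_add_not (0 < ·) s]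
  rw [Multiset.sum_add]
  have : (s.filter (fun a => ¬ 0 < a)).sum = 0 := by
    apply Multiset.sum_eq_zero
    intro x hx
    have := Multiset.of_mem_filter hx
    omega
  omega

section fwd
variable (k N : ℕ)

-- basic facts about a partition of N+k+1 with rank ≤ -k
lemma hyp_facts (l : Nat.Partition (N+k+1)) (hl : l.parts.sup + k ≤ Multiset.card l.parts) :
    1 ≤ l.parts.sup ∧ k + 1 ≤ Multiset.card l.parts ∧ Multiset.card l.parts ≤ N + k + 1 := by
  have hne : l.parts ≠ 0 := by
    intro h
    have := l.parts_sum
    rw [h] at this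
    simp at this
  have h1 : 1 ≤ l.parts.sup := l.parts_pos (Multiset.sup_mem_of_ne_zero hne)
  have h2 : Multiset.card l.parts ≤ l.parts.sum := card_le_sum (fun i hi => l.parts_pos hi)
  rw [l.parts_sum] at h2
  omega

/-- forward map: partitions of N+k+1 with rank ≤ -k  →  partitions of N -/
def fwd (l : Nat.Partition (N+k+1)) (hl : l.parts.sup + k ≤ Multiset.card l.parts) :
    Nat.Partition N where
  parts := ((l.parts.map (· - 1)) + {Multiset.card l.parts - (k+1)}).filter (0 < ·)
  parts_pos := fun hi => Multiset.of_mem_filter hi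
  parts_sum := by
    obtain ⟨h1, h2, h3⟩ := hyp_facts k N l hl
    rw [sum_filter_pos, Multiset.sum_add, Multiset.sum_singleton,
      Multiset.sum_map_pred (fun i hi => l.parts_pos hi), l.parts_sum]
    omega

lemma fwd_sup (l : Nat.Partition (N+k+1)) (hl : l.parts.sup + k ≤ Multiset.card l.parts) :
    (fwd k N l hl).parts.sup = Multiset.card l.parts - (k+1) := by
  obtain ⟨h1, h2, h3⟩ := hyp_facts k N l hl
  set b := Multiset.card l.parts - (k+1) with hb
  show (((l.parts.map (· - 1)) + {b}).filter (0 < ·)).sup = b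
  apply le_antisymm
  · apply Multiset.sup_le.2
    intro x hx
    have hx' := Multiset.mem_of_mem_filter hx
    rw [Multiset.mem_add] at hx'
    rcases hx' with hx' | hx'
    · obtain ⟨p, hp, rfl⟩ := Multiset.mem_map.1 hx'
      have : p ≤ l.parts.sup := Multiset.le_sup hp
      omega
    · rw [Multiset.mem_singleton] at hx'
      omega
  · rcases Nat.eq_zero_or_pos b with hb0 | hbpos
    · omega
    · apply Multiset.le_sup
      rw [Multiset.mem_filter]
      refine ⟨?_, hbpos⟩
      exact Multiset.mem_add.2 (Or.inr (Multiset.mem_singleton_self _))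

lemma fwd_card (l : Nat.Partition (N+k+1)) (hl : l.parts.sup + k ≤ Multiset.card l.parts) :
    Multiset.card (fwd k N l hl).parts ≤ (Multiset.card l.parts - (k+1)) + (k + 2) := by
  obtain ⟨h1, h2, h3⟩ := hyp_facts k N l hl
  have hle : Multiset.card (fwd k N l hl).parts ≤
      Multiset.card ((l.parts.map (· - 1)) + {Multiset.card l.parts - (k+1)}) :=
    Multiset.card_le_card (Multiset.filter_le _ _)
  simp only [Multiset.card_add, Multiset.card_map, Multiset.card_singleton] at hle
  omega

lemma fwd_rank (l : Nat.Partition (N+k+1)) (hl : l.parts.sup + k ≤ Multiset.card l.parts) :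
    Multiset.card (fwd k N l hl).parts ≤ (fwd k N l hl).parts.sup + (k + 2) := by
  rw [fwd_sup]; exact fwd_card k N l hl
end fwd

section bwd
variable (k N : ℕ)

/-- number of 1's to add -/
def bwdT (k : ℕ) (q : Nat.Partition N) : ℕ :=
  if 0 < q.parts.sup then q.parts.sup + k + 2 - Multiset.card q.parts else k + 1

lemma sup_pos_iff (q : Nat.Partition N) : 0 < q.parts.sup ↔ q.parts ≠ 0 := by
  constructor
  · intro h h0; rw [h0] at h; simp [Multiset.sup_zero] at h
  · intro h; exact q.parts_pos (Multiset.sup_mem_of_ne_zero h)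

/-- backward map: partitions of N with rank ≥ -(k+2) → partitions of N+k+1 -/
def bwd (q : Nat.Partition N) (hq : Multiset.card q.parts ≤ q.parts.sup + k + 2) :
    Nat.Partition (N+k+1) where
  parts := ((q.parts.erase q.parts.sup).map (· + 1)) + Multiset.replicate (bwdT N k q) 1
  parts_pos := fun hi => by
    rcases Multiset.mem_add.1 hi with hi | hi
    · obtain ⟨p, _, rfl⟩ := Multiset.mem_map.1 hi; omega
    · rw [Multiset.eq_of_mem_replicate hi]; omega
  parts_sum := by
    rw [Multiset.sum_add, Multiset.sum_replicate, smul_eq_mul, mul_one]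
    rcases eq_or_ne q.parts 0 with h0 | h0
    · rw [bwdT, if_neg (by rw [sup_pos_iff]; simpa using h0)]
      have : q.parts.sum = 0 := by rw [h0]; simp
      have hN : N = 0 := by rw [← q.parts_sum, this]
      rw [h0]
      simp [hN]
    · have hsup : q.parts.sup ∈ q.parts := Multiset.sup_mem_of_ne_zero h0
      have hpos : 0 < q.parts.sup := q.parts_pos hsup
      have hcard : 1 ≤ Multiset.card q.parts := by
        rw [Nat.one_le_iff_ne_zero, Ne, Multiset.card_eq_zero]; exact h0
      have hsum : q.parts.sup + (q.parts.erase q.parts.sup).sum = q.parts.sum := by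
        rw [← Multiset.sum_cons, Multiset.cons_erase hsup]
      have hsuple : q.parts.sup ≤ q.parts.sum := Multiset.le_sum_of_mem hsup
      have hmap : ((q.parts.erase q.parts.sup).map (· + 1)).sum
          = (q.parts.erase q.parts.sup).sum + Multiset.card (q.parts.erase q.parts.sup) := by
        induction (q.parts.erase q.parts.sup) using Multiset.induction with
        | empty => simp
        | cons a s ih => simp [ih]; omega
      rw [hmap, bwdT, if_pos hpos, Multiset.card_erase_of_mem hsup, Nat.pred_eq_sub_one]
      rw [q.parts_sum] at hsum hsuple
      omega

lemma bwd_card (q : Nat.Partition N) (hq : Multiset.card q.parts ≤ q.parts.sup + k + 2) :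
    Multiset.card (bwd k N q hq).parts = q.parts.sup + k + 1 := by
  show Multiset.card (((q.parts.erase q.parts.sup).map (· + 1))
      + Multiset.replicate (bwdT N k q) 1) = _
  rw [Multiset.card_add, Multiset.card_map, Multiset.card_replicate, bwdT]
  rcases eq_or_ne q.parts 0 with h0 | h0
  · rw [if_neg (by rw [sup_pos_iff]; simpa using h0)]
    have : q.parts.sup = 0 := by rw [h0]; rfl
    rw [h0]
    simp [this]
  · have hsup : q.parts.sup ∈ q.parts := Multiset.sup_mem_of_ne_zero h0
    have hpos : 0 < q.parts.sup := q.parts_pos hsup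
    have hcard : 1 ≤ Multiset.card q.parts := by
      rw [Nat.one_le_iff_ne_zero, Ne, Multiset.card_eq_zero]; exact h0
    rw [if_pos hpos, Multiset.card_erase_of_mem hsup, Nat.pred_eq_sub_one]
    omega

lemma bwd_sup_le (q : Nat.Partition N) (hq : Multiset.card q.parts ≤ q.parts.sup + k + 2) :
    (bwd k N q hq).parts.sup ≤ q.parts.sup + 1 := by
  show (((q.parts.erase q.parts.sup).map (· + 1))
      + Multiset.replicate (bwdT N k q) 1).sup ≤ _
  apply Multiset.sup_le.2
  intro x hx
  rcases Multiset.mem_add.1 hx with hx | hx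
  · obtain ⟨p, hp, rfl⟩ := Multiset.mem_map.1 hx
    have : p ≤ q.parts.sup := Multiset.le_sup (Multiset.mem_of_mem_erase hp)
    omega
  · rw [Multiset.eq_of_mem_replicate hx]
    have := sup_pos_iff N q
    rcases eq_or_ne q.parts 0 with h0 | h0
    · -- sup could be 0, need 1 ≤ sup + 1, trivial
      omega
    · omega

lemma bwd_rank (q : Nat.Partition N) (hq : Multiset.card q.parts ≤ q.parts.sup + k + 2) :
    (bwd k N q hq).parts.sup + k ≤ Multiset.card (bwd k N q hq).parts := by
  rw [bwd_card]
  have := bwd_sup_le k N q hq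
  omega
end bwd

section inv
variable (k N : ℕ)

lemma fwd_parts_eq (l : Nat.Partition (N+k+1)) (hl : l.parts.sup + k ≤ Multiset.card l.parts)
    (hb : 0 < Multiset.card l.parts - (k+1)) :
    (fwd k N l hl).parts
      = (l.parts.filter (2 ≤ ·)).map (· - 1) + {Multiset.card l.parts - (k+1)} := by
  show ((l.parts.map (· - 1)) + {Multiset.card l.parts - (k+1)}).filter (0 < ·) = _
  rw [Multiset.filter_add, Multiset.filter_singleton, if_pos hb, Multiset.filter_map]
  congr 1
  congr 1
  apply Multiset.filter_congr
  intro p hp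
  have := l.parts_pos hp
  show (0 < p - 1) ↔ (2 ≤ p)
  omega

lemma bwd_fwd (l : Nat.Partition (N+k+1)) (hl : l.parts.sup + k ≤ Multiset.card l.parts) :
    (bwd k N (fwd k N l hl) (fwd_rank k N l hl)).parts = l.parts := by
  obtain ⟨h1, h2, h3⟩ := hyp_facts k N l hl
  set b := Multiset.card l.parts - (k+1) with hbdef
  have hsup : (fwd k N l hl).parts.sup = b := fwd_sup k N l hl
  show ((fwd k N l hl).parts.erase (fwd k N l hl).parts.sup).map (· + 1)
      + Multiset.replicate (bwdT N k (fwd k N l hl)) 1 = l.parts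
  rcases Nat.eq_zero_or_pos b with hb0 | hbpos
  · -- all parts are 1
    have hall : ∀ p ∈ l.parts, p = 1 := by
      intro p hp
      have := l.parts_pos hp
      have := Multiset.le_sup hp
      omega
    have hP : l.parts = Multiset.replicate (Multiset.card l.parts) 1 :=
      Multiset.eq_replicate.2 ⟨rfl, hall⟩
    have hfwd0 : (fwd k N l hl).parts = 0 := by
      rw [Multiset.eq_zero_iff_forall_notMem]
      intro x hx
      have hxpos := (fwd k N l hl).parts_pos hx
      have hxle : x ≤ (fwd k N l hl).parts.sup := Multiset.le_sup hx
      omega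
    rw [hsup, hfwd0, hb0]
    simp only [Multiset.erase_zero, Multiset.map_zero, zero_add]
    rw [bwdT, if_neg (by rw [hfwd0]; simp), hP]
    congr 1
    omega
  · have hT : bwdT N k (fwd k N l hl)
        = Multiset.card l.parts - Multiset.card (l.parts.filter (2 ≤ ·)) := by
      rw [bwdT, if_pos (by rw [hsup]; exact hbpos), hsup]
      have hcard2 : Multiset.card (fwd k N l hl).parts
          = Multiset.card (l.parts.filter (2 ≤ ·)) + 1 := by
        rw [fwd_parts_eq k N l hl hbpos]
        simp
      rw [hcard2]
      have hfle : Multiset.card (l.parts.filter (2 ≤ ·)) ≤ Multiset.card l.parts :=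
        Multiset.card_le_card (Multiset.filter_le _ _)
      omega
    rw [hsup, hT, fwd_parts_eq k N l hl hbpos]
    have herase : ((l.parts.filter (2 ≤ ·)).map (· - 1) + {b}).erase b
        = (l.parts.filter (2 ≤ ·)).map (· - 1) := by
      rw [add_comm, Multiset.singleton_add, Multiset.erase_cons_head]
    rw [herase, Multiset.map_map]
    have hmapid : ((l.parts.filter (2 ≤ ·)).map ((· + 1) ∘ (· - 1))) = l.parts.filter (2 ≤ ·) := by
      rw [show ((· + 1) ∘ (· - 1) : ℕ → ℕ) = fun p => p - 1 + 1 from rfl]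
      conv_rhs => rw [← Multiset.map_id (l.parts.filter (2 ≤ ·))]
      apply Multiset.map_congr rfl
      intro p hp
      have := Multiset.of_mem_filter hp
      simp; omega
    rw [hmapid]
    have hrep : Multiset.replicate (Multiset.card l.parts
        - Multiset.card (l.parts.filter (2 ≤ ·))) 1
        = l.parts.filter (fun p => ¬ 2 ≤ p) := by
      symm
      apply Multiset.eq_replicate.2
      constructor
      · have := Multiset.filter_add_not (2 ≤ ·) l.parts
        have hc := congrArg Multiset.card this
        rw [Multiset.card_add] at hc
        omega
      · intro p hp
        have h1 := Multiset.of_mem_filter hp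
        have h2 := l.parts_pos (Multiset.mem_of_mem_filter hp)
        omega
    rw [hrep, Multiset.filter_add_not]

lemma fwd_bwd (q : Nat.Partition N) (hq : Multiset.card q.parts ≤ q.parts.sup + k + 2) :
    (fwd k N (bwd k N q hq) (bwd_rank k N q hq)).parts = q.parts := by
  have hcard : Multiset.card (bwd k N q hq).parts = q.parts.sup + k + 1 := bwd_card k N q hq
  show (((bwd k N q hq).parts.map (· - 1))
      + {Multiset.card (bwd k N q hq).parts - (k+1)}).filter (0 < ·) = q.parts
  rw [hcard]
  have hsing : q.parts.sup + k + 1 - (k+1) = q.parts.sup := by omega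
  rw [hsing]
  have hparts : (bwd k N q hq).parts
      = ((q.parts.erase q.parts.sup).map (· + 1)) + Multiset.replicate (bwdT N k q) 1 := rfl
  rw [hparts, Multiset.map_add, Multiset.map_map, Multiset.map_replicate]
  have hmapid : ((q.parts.erase q.parts.sup).map ((· - 1) ∘ (· + 1))) = q.parts.erase q.parts.sup := by
    conv_rhs => rw [← Multiset.map_id (q.parts.erase q.parts.sup)]
    apply Multiset.map_congr rfl
    intro p _
    simp
  rw [hmapid]
  show ((q.parts.erase q.parts.sup) + Multiset.replicate (bwdT N k q) (1 - 1)
      + {q.parts.sup}).filter (0 < ·) = q.parts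
  rw [Multiset.filter_add, Multiset.filter_add, Multiset.filter_singleton]
  have hrep0 : (Multiset.replicate (bwdT N k q) (1 - 1)).filter (0 < ·) = 0 := by
    rw [Multiset.eq_zero_iff_forall_notMem]
    intro x hx
    rw [Multiset.mem_filter] at hx
    have := Multiset.eq_of_mem_replicate hx.1
    omega
  have herasef : (q.parts.erase q.parts.sup).filter (0 < ·) = q.parts.erase q.parts.sup := by
    apply Multiset.filter_eq_self.2
    intro x hx
    exact q.parts_pos (Multiset.mem_of_mem_erase hx)
  rw [hrep0, herasef, add_zero]
  rcases eq_or_ne q.parts 0 with h0 | h0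
  · have hs0 : q.parts.sup = 0 := by rw [h0]; rfl
    rw [if_neg (by omega), h0]
    simp
  · have hsup : q.parts.sup ∈ q.parts := Multiset.sup_mem_of_ne_zero h0
    rw [if_pos (q.parts_pos hsup), add_comm, Multiset.singleton_add,
      Multiset.cons_erase hsup]
end inv

noncomputable def A (k n : ℕ) : ℕ := Nat.card {l : Nat.Partition n // rank l ≤ -(k:ℤ)}

lemma rank_le_iff {n : ℕ} (k : ℕ) (l : Nat.Partition n) :
    rank l ≤ -(k:ℤ) ↔ l.parts.sup + k ≤ Multiset.card l.parts := by
  unfold rank; omega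

lemma neg_le_rank_iff {n : ℕ} (k : ℕ) (l : Nat.Partition n) :
    ¬ (rank l ≤ -((k:ℤ)+3)) ↔ Multiset.card l.parts ≤ l.parts.sup + k + 2 := by
  unfold rank; omega

noncomputable def dysonEquiv (k N : ℕ) :
    {l : Nat.Partition (N+k+1) // rank l ≤ -(k:ℤ)}
      ≃ {q : Nat.Partition N // ¬ (rank q ≤ -((k:ℤ)+3))} where
  toFun l := ⟨fwd k N l.1 ((rank_le_iff k l.1).1 l.2),
    (neg_le_rank_iff k _).2 (fwd_rank k N l.1 _)⟩
  invFun q := ⟨bwd k N q.1 ((neg_le_rank_iff k q.1).1 q.2),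
    (rank_le_iff k _).2 (bwd_rank k N q.1 _)⟩
  left_inv l := Subtype.ext (Nat.Partition.ext (bwd_fwd k N l.1 ((rank_le_iff k l.1).1 l.2)))
  right_inv q := Subtype.ext (Nat.Partition.ext (fwd_bwd k N q.1 ((neg_le_rank_iff k q.1).1 q.2)))

lemma A_rec (k N : ℕ) : A k (N+k+1) + A (k+3) N = partitionCount N := by
  have h1 : A k (N+k+1) = Nat.card {q : Nat.Partition N // ¬ (rank q ≤ -((k:ℤ)+3))} :=
    Nat.card_congr (dysonEquiv k N)
  rw [h1]
  unfold A partitionCount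
  rw [Nat.card_eq_fintype_card, Nat.card_eq_fintype_card, Nat.card_eq_fintype_card,
    Fintype.card_subtype_compl]
  have hle : Fintype.card {q : Nat.Partition N // rank q ≤ -(((k:ℕ)+3:ℕ):ℤ)}
      ≤ Fintype.card (Nat.Partition N) := Fintype.card_subtype_le _
  have hcast : -(((k:ℕ)+3:ℕ):ℤ) = -((k:ℤ)+3) := by push_cast; ring
  simp_rw [hcast] at *
  omega

-- AZ
noncomputable def AZ (k : ℕ) (x : ℤ) : ℤ := if 0 ≤ x then A k x.toNat else 0

lemma A_eq_zero {k n : ℕ} (hk : 1 ≤ k) (hn : n ≤ k) : A k n = 0 := by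
  unfold A
  rw [Nat.card_eq_fintype_card, Fintype.card_eq_zero_iff]
  constructor
  rintro ⟨l, hl⟩
  rw [rank_le_iff] at hl
  rcases eq_or_ne l.parts 0 with h0 | h0
  · rw [h0] at hl; simp at hl; omega
  · have h1 : 1 ≤ l.parts.sup := l.parts_pos (Multiset.sup_mem_of_ne_zero h0)
    have h2 : Multiset.card l.parts ≤ l.parts.sum := card_le_sum (fun i hi => l.parts_pos hi)
    rw [l.parts_sum] at h2
    omega

lemma AZ_rec {k : ℕ} (hk : 1 ≤ k) (x : ℤ) :
    AZ k x = pZ (x - (k+1)) - AZ (k+3) (x - (k+1)) := by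
  rcases lt_or_ge x 0 with hx | hx
  · rw [AZ, if_neg (by omega), AZ, if_neg (by omega), pZ, if_neg (by omega)]; ring
  rcases lt_or_ge x (k+1) with hx2 | hx2
  · rw [AZ, if_pos hx, A_eq_zero hk (by omega), AZ, if_neg (by omega), pZ, if_neg (by omega)]
    simp
  · set N : ℕ := (x - (k+1)).toNat with hN
    have hxN : x.toNat = N + k + 1 := by omega
    have hxk : (x - (k+1)).toNat = N := rfl
    rw [AZ, if_pos hx, AZ, if_pos (by omega), pZ, if_pos (by omega), hxN, hxk]
    have := A_rec k N
    omega

-- the shift function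
def u : ℕ → ℕ → ℕ
  | i, 0 => 3*i+3
  | i, j+1 => (3*i+3) + u (i+1) j

lemma u_ge (i j : ℕ) : 3*j+3 ≤ u i j := by
  induction j generalizing i with
  | zero => simp [u]
  | succ j ih => have := ih (i+1); simp only [u]; omega

lemma u_closed (j i : ℕ) : 2 * u i j = 6*(j+1)*i + 3*(j+1)*(j+2) := by
  induction j generalizing i with
  | zero => simp [u]; ring
  | succ j ih =>
    show 2 * ((3*i+3) + u (i+1) j) = _
    rw [mul_add, ih (i+1)]
    ring

lemma u_zero_eq (j : ℕ) : u 0 j = 3 * (j + 1) * (j + 2) / 2 := by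
  have := u_closed j 0
  omega

lemma pZ_neg {x : ℤ} (hx : x < 0) : pZ x = 0 := by rw [pZ, if_neg (by omega)]

/-- main unrolled identity -/
lemma AZ_eq_tsum (n : ℕ) : ∀ i : ℕ, ∀ x : ℤ, x ≤ n →
    AZ (3*i+2) x = ∑' j : ℕ, (-1 : ℤ)^j * pZ (x - u i j) := by
  induction n using Nat.strong_induction_on with
  | _ n IH =>
  intro i x hx
  have hneg : ∀ y : ℤ, y < 0 → ∀ i' : ℕ, (∑' j : ℕ, (-1 : ℤ)^j * pZ (y - u i' j)) = 0 := by
    intro y hy i'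
    have : (fun j : ℕ => (-1 : ℤ)^j * pZ (y - u i' j)) = fun _ => 0 := by
      funext j
      rw [pZ_neg (by have := u_ge i' j; omega), mul_zero]
    rw [this, tsum_zero]
  rcases lt_or_ge x 0 with hx0 | hx0
  · rw [hneg x hx0 i, AZ, if_neg (by omega)]
  -- x ≥ 0
  have hrec := AZ_rec (k := 3*i+2) (by omega) x
  have hk31 : (3*i+2) + 3 = 3*(i+1)+2 := by ring
  have hkc : ((3*i+2 : ℕ) : ℤ) + 1 = (3*i+3 : ℕ) := by push_cast; ring
  rw [hkc, hk31] at hrec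
  -- value of the shifted AZ
  have hshift : AZ (3*(i+1)+2) (x - (3*i+3 : ℕ))
      = ∑' j : ℕ, (-1 : ℤ)^j * pZ ((x - (3*i+3 : ℕ)) - u (i+1) j) := by
    rcases lt_or_ge (x - (3*i+3 : ℕ)) 0 with hy | hy
    · rw [hneg _ hy (i+1), AZ, if_neg (by omega)]
    · have hn3 : 3 ≤ n := by
        have : (3:ℤ) ≤ x := by push_cast at hy ⊢; omega
        omega
      exact IH (n-3) (by omega) (i+1) _ (by push_cast at hx ⊢; omega)
  rw [hshift] at hrec
  -- convert tsums to finite sums and peel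
  set J : ℕ := x.toNat + 1 with hJ
  have hsupf : ∀ j : ℕ, j ∉ Finset.range (J+1) → (-1 : ℤ)^j * pZ (x - u i j) = 0 := by
    intro j hj
    rw [Finset.mem_range, not_lt] at hj
    rw [pZ_neg (by have := u_ge i j; omega), mul_zero]
  have hsupg : ∀ j : ℕ, j ∉ Finset.range J →
      (-1 : ℤ)^j * pZ ((x - (3*i+3 : ℕ)) - u (i+1) j) = 0 := by
    intro j hj
    rw [Finset.mem_range, not_lt] at hj
    rw [pZ_neg (by have := u_ge (i+1) j; omega), mul_zero]
  rw [tsum_eq_sum hsupg] at hrec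
  rw [tsum_eq_sum hsupf, hrec,
    Finset.sum_range_succ' (fun j => (-1:ℤ)^j * pZ (x - (u i j : ℤ))) J]
  have hterm : ∀ j : ℕ, (-1 : ℤ)^(j+1) * pZ (x - u i (j+1))
      = -((-1 : ℤ)^j * pZ ((x - (3*i+3 : ℕ)) - u (i+1) j)) := by
    intro j
    have harg : x - (u i (j+1) : ℤ) = (x - (3*i+3 : ℕ)) - u (i+1) j := by
      show x - ((((3*i+3) + u (i+1) j : ℕ)) : ℤ) = _
      push_cast
      ring
    rw [harg, pow_succ]
    ring
  have hcong : (∑ j ∈ Finset.range J, (-1:ℤ)^(j+1) * pZ (x - (u i (j+1) : ℤ)))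
      = ∑ j ∈ Finset.range J, -((-1:ℤ)^j * pZ ((x - ((3*i+3 : ℕ) : ℤ)) - (u (i+1) j : ℤ))) :=
    Finset.sum_congr rfl (fun j _ => hterm j)
  rw [hcong]
  have hu0 : (u i 0 : ℤ) = ((3*i+3 : ℕ) : ℤ) := by norm_num [u]
  rw [Finset.sum_neg_distrib, pow_zero, one_mul, hu0]
  ring

lemma aZ_sum {r m : ℕ} (h : r < m) (n : ℕ) (y : ℤ) (hy : y ≤ n) :
    aZ r m y = ∑ i ∈ Finset.range (n+1), ((m*i+r : ℕ) : ℤ) * pZ (y - (m*i+r : ℕ)) := by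
  rcases lt_or_ge y 0 with hy0 | hy0
  · rw [aZ, if_neg (by omega)]
    symm
    apply Finset.sum_eq_zero
    intro i _
    rw [pZ_neg (by omega), mul_zero]
  · set t : ℕ := y.toNat with ht
    have hyt : y = (t : ℤ) := by omega
    have htn : t ≤ n := by omega
    rw [aZ, if_pos hy0, a_eq]
    -- rewrite RHS termwise
    have hRHS : ∀ i ∈ Finset.range (n+1), ((m*i+r : ℕ) : ℤ) * pZ (y - (m*i+r : ℕ))
        = if m*i+r ≤ t then ((m*i+r) * partitionCount (t - (m*i+r)) : ℕ) else 0 := by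
      intro i _
      rcases le_or_gt (m*i+r) t with hle | hlt
      · rw [if_pos hle, pZ, if_pos (by omega)]
        have : (y - ((m*i+r:ℕ):ℤ)).toNat = t - (m*i+r) := by omega
        rw [this]
        push_cast
        ring
      · rw [if_neg (by omega), pZ_neg (by omega), mul_zero, Nat.cast_zero]
    rw [Finset.sum_congr rfl hRHS]
    -- now a ℕ-level statement, cast
    rw [← Nat.cast_sum]
    rw [← ht]
    congr 1
    rw [← Finset.sum_filter, ← Finset.sum_filter]
    apply Finset.sum_nbij' (i := fun d => (d - r)/m) (j := fun i => m*i+r)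
    · intro d hd
      simp only [Finset.mem_filter, Finset.mem_range] at hd ⊢
      obtain ⟨hd1, hd2⟩ := hd
      have hrd : r ≤ d := by
        have := Nat.mod_le d m
        omega
      have hdvd : m ∣ d - r := by
        have : d ≡ r [MOD m] := by
          unfold Nat.ModEq
          rw [Nat.mod_eq_of_lt h, hd2]
        exact (Nat.modEq_iff_dvd' hrd).1 this.symm
      have hq : m * ((d - r)/m) = d - r := Nat.mul_div_cancel' hdvd
      constructor
      · have : (d-r)/m ≤ d - r := Nat.div_le_self _ _
        omega
      · omega
    · intro i hi
      simp only [Finset.mem_filter, Finset.mem_range] at hi ⊢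
      refine ⟨by omega, ?_⟩
      rw [Nat.mul_add_mod, Nat.mod_eq_of_lt h]
    · intro d hd
      simp only [Finset.mem_filter, Finset.mem_range] at hd
      obtain ⟨hd1, hd2⟩ := hd
      have hrd : r ≤ d := by
        have := Nat.mod_le d m
        omega
      have hdvd : m ∣ d - r := by
        have : d ≡ r [MOD m] := by
          unfold Nat.ModEq
          rw [Nat.mod_eq_of_lt h, hd2]
        exact (Nat.modEq_iff_dvd' hrd).1 this.symm
      have hq : m * ((d - r)/m) = d - r := Nat.mul_div_cancel' hdvd
      omega
    · intro i hi
      have : (m*i+r - r) = m*i := by omega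
      rw [this, Nat.mul_div_cancel_left i (by omega : 0 < m)]
    · intro d hd
      simp only [Finset.mem_filter, Finset.mem_range] at hd
      obtain ⟨hd1, hd2⟩ := hd
      have hrd : r ≤ d := by
        have := Nat.mod_le d m
        omega
      have hdvd : m ∣ d - r := by
        have : d ≡ r [MOD m] := by
          unfold Nat.ModEq
          rw [Nat.mod_eq_of_lt h, hd2]
        exact (Nat.modEq_iff_dvd' hrd).1 this.symm
      have hq : m * ((d - r)/m) = d - r := Nat.mul_div_cancel' hdvd
      have hmq : m * ((d - r)/m) + r = d := by omega
      rw [hmq]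

lemma G_eq_A (n : ℕ) : G n = A 2 n :=
  Nat.card_congr (Equiv.subtypeEquivRight (fun l => by norm_num))

lemma GZ_eq_AZ (x : ℤ) : GZ x = AZ 2 x := by
  unfold GZ AZ
  rw [G_eq_A]

/-- Merca, Corollary 6.2(i). -/
theorem a_garden (m n r : ℕ) (h : r < m) :
    (∑' j : ℕ, (-1 : ℤ) ^ j * aZ r m ((n : ℤ) - (3 * (j + 1) * (j + 2) / 2 : ℕ))) =
      ∑' j : ℕ, ((m * j + r : ℕ) : ℤ) * GZ ((n : ℤ) - (m * j + r : ℕ)) := by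
  have hTge : ∀ j : ℕ, 3*j+3 ≤ 3 * (j + 1) * (j + 2) / 2 := fun j => by
    rw [← u_zero_eq]; exact u_ge 0 j
  have haZ0 : ∀ y : ℤ, y < 0 → aZ r m y = 0 := fun y hy => by rw [aZ, if_neg (by omega)]
  have hGZ0 : ∀ y : ℤ, y < 0 → GZ y = 0 := fun y hy => by rw [GZ, if_neg (by omega)]
  rw [tsum_eq_sum (s := Finset.range (n+1)) (f := fun j : ℕ =>
      (-1 : ℤ) ^ j * aZ r m ((n : ℤ) - (3 * (j + 1) * (j + 2) / 2 : ℕ))) (by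
    intro j hj
    rw [Finset.mem_range, not_lt] at hj
    show (-1:ℤ)^j * aZ r m ((n : ℤ) - (3 * (j + 1) * (j + 2) / 2 : ℕ)) = 0
    have hc : ((3*j+3:ℕ):ℤ) ≤ ((3 * (j + 1) * (j + 2) / 2 : ℕ) : ℤ) := Nat.cast_le.2 (hTge j)
    rw [haZ0 _ (by omega), mul_zero])]
  rw [tsum_eq_sum (s := Finset.range (n+1)) (f := fun i : ℕ =>
      ((m * i + r : ℕ) : ℤ) * GZ ((n : ℤ) - (m * i + r : ℕ))) (by
    intro i hi
    rw [Finset.mem_range, not_lt] at hi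
    show ((m * i + r : ℕ) : ℤ) * GZ ((n : ℤ) - (m * i + r : ℕ)) = 0
    have hc : (i:ℤ) ≤ ((m*i+r : ℕ):ℤ) := Nat.cast_le.2 (by nlinarith)
    rw [hGZ0 _ (by omega), mul_zero])]
  have hstep : ∀ j ∈ Finset.range (n+1),
      (-1:ℤ)^j * aZ r m ((n:ℤ) - (3*(j+1)*(j+2)/2 : ℕ))
      = ∑ i ∈ Finset.range (n+1),
          ((m*i+r:ℕ):ℤ) * ((-1:ℤ)^j * pZ ((((n:ℤ) - (m*i+r:ℕ))) - (u 0 j : ℕ))) := by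
    intro j _
    rw [aZ_sum h n _ (by omega), Finset.mul_sum]
    apply Finset.sum_congr rfl
    intro i _
    have harg : (n:ℤ) - (3*(j+1)*(j+2)/2 : ℕ) - (m*i+r:ℕ)
        = (((n:ℤ) - (m*i+r:ℕ))) - (u 0 j : ℕ) := by
      rw [u_zero_eq]
      ring
    rw [harg]
    ring
  rw [Finset.sum_congr rfl hstep, Finset.sum_comm]
  apply Finset.sum_congr rfl
  intro i _
  rw [← Finset.mul_sum]
  congr 1
  rw [GZ_eq_AZ]
  have h2 : AZ 2 ((n:ℤ) - (m*i+r:ℕ))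
      = ∑' j : ℕ, (-1:ℤ)^j * pZ ((((n:ℤ) - (m*i+r:ℕ))) - (u 0 j : ℕ)) := by
    have h3 := AZ_eq_tsum n 0 ((n:ℤ) - (m*i+r:ℕ)) (by omega)
    norm_num at h3
    exact h3
  rw [h2, tsum_eq_sum (s := Finset.range (n+1)) (by
    intro j hj
    rw [Finset.mem_range, not_lt] at hj
    have hub : ((3*j+3:ℕ):ℤ) ≤ ((u 0 j : ℕ):ℤ) := Nat.cast_le.2 (u_ge 0 j)
    rw [pZ_neg (by omega), mul_zero])]
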